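/- Let f be a k-variable Boolean function with γ = Ess(f) essential variables. Then the set of Boolean functions { f ∘ π : π a permutation of {1,…,k} }, where (f ∘ π)(x_1,…,x_k) := f(x_{π(1)},…,x_{π(k)}), has cardinality at least the binomial coefficient C(k, γ). -/

import Mathlib

/-- A plane rooted tree (shape of an and/or tree). -/
inductive PTree where
  | leaf : PTree
  | node : List PTree → PTree

/-- An and/or tree shape: every internal node has at least two children. -/
inductive IsShape : PTree → Prop
  | leaf : IsShape .leaf
  | node (cs : List PTree) : 2 ≤ cs.length → (∀ c ∈ cs, IsShape c) → IsShape (.node cs)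

/-- The size of a shape: its number of leaves. -/
def PTree.size : PTree → ℕ
  | .leaf => 1
  | .node cs => (cs.attach.map (fun ⟨c, _⟩ => c.size)).sum
decreasing_by
  have := List.sizeOf_lt_of_mem ‹c ∈ cs›; simp only [PTree.node.sizeOf_spec]; omega

/-- The saturation level of a shape: the minimal depth of a leaf. -/
def PTree.satLevel : PTree → ℕ
  | .leaf => 0
  | .node cs => ((cs.attach.map (fun ⟨c, _⟩ => c.satLevel)).min?.getD 0) + 1
decreasing_by
  have := List.sizeOf_lt_of_mem ‹c ∈ cs›; simp only [PTree.node.sizeOf_spec]; omega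

/-- A `k`-labelled and/or tree: internal nodes carry a connective
(`true` = ∧, `false` = ∨), leaves carry a literal: a variable index in `Fin k`
together with a polarity (`true` = positive, `false` = negated). -/
inductive LTree (k : ℕ) where
  | leaf : Fin k → Bool → LTree k
  | node : Bool → List (LTree k) → LTree k

/-- Evaluation of a labelled and/or tree, with the convention that a childless
internal node labelled ∧ (resp. ∨) evaluates to `false` (resp. `true`). -/
def LTree.eval {k : ℕ} : LTree k → (Fin k → Bool) → Bool
  | .leaf i pos, x => if pos then x i else !(x i)
  | .node c cs, x =>
    if cs.isEmpty then !c
    else if c then (cs.attach.map (fun ⟨t, _⟩ => t.eval x)).all (fun b => b)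
    else (cs.attach.map (fun ⟨t, _⟩ => t.eval x)).any (fun b => b)
decreasing_by
  all_goals (have := List.sizeOf_lt_of_mem ‹t ∈ cs›; simp only [LTree.node.sizeOf_spec]; omega)

/-- A valid labelled and/or tree: every internal node has at least two children. -/
inductive IsLShape {k : ℕ} : LTree k → Prop
  | leaf (i : Fin k) (pos : Bool) : IsLShape (.leaf i pos)
  | node (c : Bool) (cs : List (LTree k)) : 2 ≤ cs.length →
      (∀ t ∈ cs, IsLShape t) → IsLShape (.node c cs)

/-- The size of a labelled tree: its number of leaves. -/
def LTree.size {k : ℕ} : LTree k → ℕ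
  | .leaf _ _ => 1
  | .node _ cs => (cs.attach.map (fun ⟨t, _⟩ => t.size)).sum
decreasing_by
  have := List.sizeOf_lt_of_mem ‹t ∈ cs›; simp only [LTree.node.sizeOf_spec]; omega

/-- The list of leaf labels of a labelled tree. -/
def LTree.leaves {k : ℕ} : LTree k → List (Fin k × Bool)
  | .leaf i pos => [(i, pos)]
  | .node _ cs => (cs.attach.map (fun ⟨t, _⟩ => t.leaves)).flatten
decreasing_by
  have := List.sizeOf_lt_of_mem ‹t ∈ cs›; simp only [LTree.node.sizeOf_spec]; omega

/-- The list of all `k`-labellings of a given shape (each one equally likely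
under the uniform random labelling). -/
def labellings (k : ℕ) : PTree → List (LTree k)
  | .leaf => (List.finRange k).flatMap (fun i => [LTree.leaf i true, LTree.leaf i false])
  | .node cs => [true, false].flatMap (fun c =>
      ((cs.attach.map (fun ⟨t, _⟩ => labellings k t)).sections).map (fun l => LTree.node c l))
decreasing_by
  have := List.sizeOf_lt_of_mem ‹t ∈ cs›; simp only [PTree.node.sizeOf_spec]; omega

open Classical in
/-- The probability that the uniform random `k`-labelling of the shape `t`
computes a Boolean function belonging to the set `s`. -/
noncomputable def Pr (k : ℕ) (t : PTree) (s : Set ((Fin k → Bool) → Bool)) : ℝ :=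
  (((labellings k t).filter (fun τ => decide (τ.eval ∈ s))).length : ℝ)
    / ((labellings k t).length : ℝ)

/-- `Pfun k t g` = `P_k[t](g)`: the probability that the uniform random
`k`-labelling of the shape `t` computes exactly the Boolean function `g`. -/
noncomputable def Pfun (k : ℕ) (t : PTree) (g : (Fin k → Bool) → Bool) : ℝ :=
  Pr k t {g}

/-- `x_i` is an essential variable of `f`. -/
def Essential {k : ℕ} (f : (Fin k → Bool) → Bool) (i : Fin k) : Prop :=
  ∃ x : Fin k → Bool, f (Function.update x i true) ≠ f (Function.update x i false)

open Classical in
/-- The number of essential variables of `f`. -/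
noncomputable def essCount {k : ℕ} (f : (Fin k → Bool) → Bool) : ℕ :=
  (Finset.univ.filter (fun i => Essential f i)).card

open Classical in
/-- The complexity `L(f)`: the minimal number of leaves of a valid `k`-labelled
and/or tree computing `f`, with the convention `L(True) = L(False) = 0`. -/
noncomputable def complexity (k : ℕ) (f : (Fin k → Bool) → Bool) : ℕ :=
  if f = (fun _ => true) ∨ f = (fun _ => false) then 0
  else sInf {n | ∃ τ : LTree k, IsLShape τ ∧ τ.eval = f ∧ τ.size = n}


open Classical in
lemma essential_comp_iff {k : ℕ} (f : (Fin k → Bool) → Bool) (π : Equiv.Perm (Fin k))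
    (j : Fin k) :
    Essential (fun x => f (fun i => x (π i))) j ↔ Essential f (π.symm j) := by
  have key : ∀ (x : Fin k → Bool) (b : Bool),
      (fun i => (Function.update x j b) (π i)) =
        Function.update (fun i => x (π i)) (π.symm j) b := by
    intro x b
    funext i
    rw [Function.update_apply, Function.update_apply]
    by_cases h : i = π.symm j
    · subst h; simp
    · rw [if_neg h, if_neg]
      intro hc
      exact h (by rw [Equiv.eq_symm_apply, hc])
  constructor
  · rintro ⟨x, hx⟩
    refine ⟨fun i => x (π i), ?_⟩
    rw [← key, ← key]
    exact hx
  · rintro ⟨y, hy⟩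
    refine ⟨fun i => y (π.symm i), ?_⟩
    have hyy : (fun i => y (π.symm (π i))) = y := by funext i; simp
    simp only [key, hyy]
    exact hy

/-- If `f` has `γ = Ess(f)` essential variables, then the set
`{f ∘ π : π a permutation of the k variables}` has cardinality at least the
binomial coefficient `C(k, γ)`. -/
theorem perm_orbit_card_lower_bound (k : ℕ) (f : (Fin k → Bool) → Bool) :
    k.choose (essCount f)
      ≤ Set.ncard {g : (Fin k → Bool) → Bool |
          ∃ π : Equiv.Perm (Fin k), g = fun x => f (fun i => x (π i))} := by
  classical
  set O := {g : (Fin k → Bool) → Bool |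
      ∃ π : Equiv.Perm (Fin k), g = fun x => f (fun i => x (π i))} with hOdef
  have hO : O.Finite := Set.toFinite _
  set E : ((Fin k → Bool) → Bool) → Finset (Fin k) :=
    fun g => Finset.univ.filter (fun i => Essential g i) with hEdef
  have hEc : essCount f = (E f).card := by
    rw [essCount, hEdef]
  have hsurj : Set.SurjOn E (hO.toFinset : Set _)
      ((Finset.univ.powersetCard (essCount f) : Finset (Finset (Fin k))) : Set _) := by
    intro S hS
    simp only [Finset.mem_coe, Finset.mem_powersetCard_univ] at hS
    have hScard : S.card = (E f).card := by rw [hS, hEc]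
    have hc : (Sᶜ : Finset (Fin k)).card = ((E f)ᶜ : Finset (Fin k)).card := by
      simp [Finset.card_compl, hScard]
    let eS : {x // x ∈ S} ≃ {x // x ∈ E f} := Finset.equivOfCardEq hScard
    let eSc : {x // x ∈ (Sᶜ : Finset (Fin k))} ≃ {x // x ∈ ((E f)ᶜ : Finset (Fin k))} :=
      Finset.equivOfCardEq hc
    let eS' : {x // x ∈ S} ⊕ {x // x ∉ S} ≃ {x // x ∈ E f} ⊕ {x // x ∉ E f} :=
      Equiv.sumCongr eS
        (((Equiv.subtypeEquivRight (fun x => by simp)).trans eSc).trans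
          (Equiv.subtypeEquivRight (fun x => by simp)))
    let σ : Equiv.Perm (Fin k) :=
      ((Equiv.sumCompl (· ∈ S)).symm.trans eS').trans (Equiv.sumCompl (· ∈ E f))
    have hσ : ∀ j, σ j ∈ E f ↔ j ∈ S := by
      intro j
      by_cases hj : j ∈ S
      · simp only [σ, Equiv.trans_apply, Equiv.sumCompl_symm_apply_of_pos hj,
          eS', Equiv.sumCongr_apply, Sum.map_inl, Equiv.sumCompl_apply_inl]
        exact iff_of_true (Subtype.prop _) hj
      · simp only [σ, Equiv.trans_apply, Equiv.sumCompl_symm_apply_of_neg hj,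
          eS', Equiv.sumCongr_apply, Sum.map_inr, Equiv.sumCompl_apply_inr]
        exact iff_of_false (Subtype.prop (p := fun x => x ∉ E f) _) hj
    rw [Set.mem_image]
    refine ⟨fun x => f (fun i => x (σ.symm i)), ?_, ?_⟩
    · simp only [Finset.mem_coe, Set.Finite.mem_toFinset, hOdef, Set.mem_setOf_eq]
      exact ⟨σ.symm, rfl⟩
    · ext j
      simp only [hEdef, Finset.mem_filter, Finset.mem_univ, true_and]
      rw [essential_comp_iff f σ.symm j]
      have : (σ.symm).symm j = σ j := rfl
      rw [this]
      constructor
      · intro h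
        have : σ j ∈ E f := by simp [hEdef, h]
        exact (hσ j).1 this
      · intro h
        have := (hσ j).2 h
        simpa [hEdef] using this
  have h1 : (Finset.univ.powersetCard (essCount f) : Finset (Finset (Fin k))).card
      ≤ hO.toFinset.card := Finset.card_le_card_of_surjOn E hsurj
  have h2 : (Finset.univ.powersetCard (essCount f) : Finset (Finset (Fin k))).card
      = k.choose (essCount f) := by
    rw [Finset.card_powersetCard]; simp
  rw [Set.ncard_eq_toFinset_card O hO]
  omega
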